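/- Let G be a connected undirected graph with Laplacian L having algebraic connectivity λ_2. Along solutions of dS_i/dt = Σ_{j∈N_i}(S_j - S_i)/‖S_j - S_i‖_F^α with α ∈ (0,1), define δ_i = S_i - S_c where S_c is the (constant) average, and V = (1/2) Σ_i ‖δ_i‖_F². Then dV/dt ≤ -κ V^{(2-α)/2} with κ = (2λ_2)^{(2-α)/2}, and hence V(t) = 0 for all t ≥ T_c with T_c ≤ 2 V(0)^{α/2}/(κ α); i.e., all S_i converge to the initial average Ave{S_i(0)} in finite time. -/

import Mathlib

open Matrix
open scoped Classical

/-- Frobenius norm of a real matrix. -/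
noncomputable def frobNorm {m : Type*} [Fintype m] {l : Type*} [Fintype l]
    (M : Matrix m l ℝ) : ℝ :=
  Real.sqrt (Matrix.trace (Mᵀ * M))

namespace FTCaux


lemma trace_eq {m l : Type*} [Fintype m] [Fintype l] (M : Matrix m l ℝ) :
    Matrix.trace (Mᵀ * M) = ∑ a, ∑ b, M a b ^ 2 := by
  simp only [Matrix.trace, Matrix.diag, Matrix.mul_apply, Matrix.transpose_apply, sq]
  exact Finset.sum_comm

lemma frob_sq {m l : Type*} [Fintype m] [Fintype l] (M : Matrix m l ℝ) :
    frobNorm M ^ 2 = ∑ a, ∑ b, M a b ^ 2 := by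
  rw [frobNorm, Real.sq_sqrt (by rw [trace_eq]; positivity), trace_eq]

lemma frob_nonneg {m l : Type*} [Fintype m] [Fintype l] (M : Matrix m l ℝ) :
    0 ≤ frobNorm M := Real.sqrt_nonneg _

lemma frob_neg {m l : Type*} [Fintype m] [Fintype l] (M : Matrix m l ℝ) :
    frobNorm (-M) = frobNorm M := by
  simp [frobNorm, Matrix.transpose_neg, Matrix.neg_mul, Matrix.mul_neg, neg_neg]

lemma frob_pos {m l : Type*} [Fintype m] [Fintype l] (M : Matrix m l ℝ) (h : M ≠ 0) :
    0 < frobNorm M := by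
  rcases lt_or_eq_of_le (frob_nonneg M) with h1 | h1
  · exact h1
  · exfalso; apply h
    have h2 : frobNorm M ^ 2 = 0 := by rw [← h1]; ring
    rw [frob_sq] at h2
    ext a b
    have := (Finset.sum_eq_zero_iff_of_nonneg (fun a _ => by positivity)).1 h2 a (Finset.mem_univ a)
    have := (Finset.sum_eq_zero_iff_of_nonneg (fun b _ => by positivity)).1 this b (Finset.mem_univ b)
    simpa using sq_eq_zero_iff.1 this

lemma sum_swap3 {A B C : Type*} [Fintype A] [Fintype B] [Fintype C] (f : A → B → C → ℝ) :
    ∑ a, ∑ b, ∑ c, f a b c = ∑ c, ∑ a, ∑ b, f a b c := by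
  calc ∑ a, ∑ b, ∑ c, f a b c = ∑ a, ∑ c, ∑ b, f a b c :=
        Finset.sum_congr rfl (fun a _ => Finset.sum_comm)
    _ = ∑ c, ∑ a, ∑ b, f a b c := Finset.sum_comm

lemma sum_swap4 {A B C D : Type*} [Fintype A] [Fintype B] [Fintype C] [Fintype D]
    (f : A → B → C → D → ℝ) :
    ∑ a, ∑ b, ∑ c, ∑ d, f a b c d = ∑ c, ∑ d, ∑ a, ∑ b, f a b c d := by
  calc ∑ a, ∑ b, ∑ c, ∑ d, f a b c d
      = ∑ c, ∑ a, ∑ b, ∑ d, f a b c d := sum_swap3 _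
    _ = ∑ c, ∑ d, ∑ a, ∑ b, f a b c d := Finset.sum_congr rfl (fun c _ => sum_swap3 _)

lemma rpow_two_term {p : ℝ} (hp0 : 0 ≤ p) (hp1 : p ≤ 1) {a b : ℝ} (ha : 0 ≤ a) (hb : 0 ≤ b) :
    (a + b) ^ p ≤ a ^ p + b ^ p := by
  lift a to NNReal using ha
  lift b to NNReal using hb
  have := NNReal.rpow_add_le_add_rpow a b hp0 hp1
  have h2 : ((a + b : NNReal) : ℝ) ^ p ≤ ((a ^ p + b ^ p : NNReal) : ℝ) := by
    rw [← NNReal.coe_rpow]; exact_mod_cast this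
  simpa [NNReal.coe_rpow] using h2

lemma sum_rpow_ge {ι : Type*} (s : Finset ι) (f : ι → ℝ) (hf : ∀ i ∈ s, 0 ≤ f i)
    {p : ℝ} (hp0 : 0 < p) (hp1 : p ≤ 1) :
    (∑ i ∈ s, f i) ^ p ≤ ∑ i ∈ s, f i ^ p := by
  induction s using Finset.cons_induction with
  | empty => simp [Real.zero_rpow hp0.ne']
  | cons a s ha ih =>
    rw [Finset.sum_cons, Finset.sum_cons]
    have h1 : (f a + ∑ i ∈ s, f i) ^ p ≤ f a ^ p + (∑ i ∈ s, f i) ^ p :=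
      rpow_two_term hp0.le hp1 (hf a (Finset.mem_cons_self a s))
        (Finset.sum_nonneg (fun i hi => hf i (Finset.mem_cons_of_mem hi)))
    exact h1.trans (by gcongr; exact ih (fun i hi => hf i (Finset.mem_cons_of_mem hi)))




lemma sum_adj_antisymm {n : ℕ} (G : SimpleGraph (Fin n)) (f : Fin n → Fin n → ℝ)
    (hanti : ∀ i j, f j i = - f i j) :
    ∑ i, ∑ j, (if G.Adj i j then f i j else 0) = 0 := by
  have h : ∑ i, ∑ j, (if G.Adj i j then f i j else 0)
      = ∑ i, ∑ j, (if G.Adj i j then - f i j else 0) := by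
    rw [Finset.sum_comm]
    refine Finset.sum_congr rfl fun i _ => Finset.sum_congr rfl fun j _ => ?_
    rw [G.adj_comm, hanti]
  have h2 : ∑ i, ∑ j, (if G.Adj i j then - f i j else 0)
      = - ∑ i, ∑ j, (if G.Adj i j then f i j else 0) := by
    rw [← Finset.sum_neg_distrib]
    refine Finset.sum_congr rfl fun i _ => ?_
    rw [← Finset.sum_neg_distrib]
    refine Finset.sum_congr rfl fun j _ => ?_
    split_ifs <;> simp
  linarith [h.trans h2]

lemma sum_adj_pair {n : ℕ} (G : SimpleGraph (Fin n)) (f : Fin n → Fin n → ℝ)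
    (hsymm : ∀ i j, f i j = f j i) :
    ∑ i, ∑ j, (if G.Adj i j then f i j else 0) =
      2 * ∑ ij ∈ Finset.univ.filter
          (fun ij : Fin n × Fin n => G.Adj ij.1 ij.2 ∧ ij.1 < ij.2), f ij.1 ij.2 := by
  have h0 : ∑ i, ∑ j, (if G.Adj i j then f i j else 0)
      = ∑ ij ∈ Finset.univ.filter (fun ij : Fin n × Fin n => G.Adj ij.1 ij.2), f ij.1 ij.2 := by
    rw [Finset.sum_filter, ← Finset.univ_product_univ, Finset.sum_product]
  rw [h0]
  have hsplit : Finset.univ.filter (fun ij : Fin n × Fin n => G.Adj ij.1 ij.2)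
      = (Finset.univ.filter (fun ij : Fin n × Fin n => G.Adj ij.1 ij.2 ∧ ij.1 < ij.2))
        ∪ (Finset.univ.filter (fun ij : Fin n × Fin n => G.Adj ij.1 ij.2 ∧ ij.2 < ij.1)) := by
    ext ij
    simp only [Finset.mem_filter, Finset.mem_union, Finset.mem_univ, true_and]
    constructor
    · intro h
      rcases lt_or_gt_of_ne (G.ne_of_adj h) with h1 | h1
      · exact Or.inl ⟨h, h1⟩
      · exact Or.inr ⟨h, h1⟩
    · rintro (⟨h, _⟩ | ⟨h, _⟩) <;> exact h
  have hdisj : Disjoint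
      (Finset.univ.filter (fun ij : Fin n × Fin n => G.Adj ij.1 ij.2 ∧ ij.1 < ij.2))
      (Finset.univ.filter (fun ij : Fin n × Fin n => G.Adj ij.1 ij.2 ∧ ij.2 < ij.1)) := by
    rw [Finset.disjoint_filter]
    rintro ij _ ⟨_, h1⟩ ⟨_, h2⟩
    exact absurd h2 (not_lt_of_gt h1)
  rw [hsplit, Finset.sum_union hdisj]
  have hswap : ∑ ij ∈ Finset.univ.filter
        (fun ij : Fin n × Fin n => G.Adj ij.1 ij.2 ∧ ij.2 < ij.1), f ij.1 ij.2
      = ∑ ij ∈ Finset.univ.filter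
        (fun ij : Fin n × Fin n => G.Adj ij.1 ij.2 ∧ ij.1 < ij.2), f ij.1 ij.2 := by
    refine Finset.sum_nbij' (fun ij => ij.swap) (fun ij => ij.swap) ?_ ?_ ?_ ?_ ?_
    · intro ij hij
      simp only [Finset.mem_filter, Finset.mem_univ, true_and] at hij ⊢
      exact ⟨(G.adj_comm _ _).1 hij.1, hij.2⟩
    · intro ij hij
      simp only [Finset.mem_filter, Finset.mem_univ, true_and] at hij ⊢
      exact ⟨(G.adj_comm _ _).1 hij.1, hij.2⟩
    · intro ij _; simp
    · intro ij _; simp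
    · intro ij _; exact hsymm _ _
  rw [hswap]; ring




lemma lap_quad_lower {n : ℕ} (G : SimpleGraph (Fin n)) (hconn : G.Connected)
    (lam2 : ℝ)
    (hspec : ∀ μ : ℝ, μ ∈ spectrum ℝ (G.lapMatrix ℝ) → μ = 0 ∨ lam2 ≤ μ)
    (v : Fin n → ℝ) (hv : ∑ i, v i = 0) :
    lam2 * ∑ i, v i ^ 2 ≤ v ⬝ᵥ (G.lapMatrix ℝ *ᵥ v) := by
  classical
  set A : Matrix (Fin n) (Fin n) ℝ := G.lapMatrix ℝ with hA_def
  have hA : A.IsHermitian := (SimpleGraph.posSemidef_lapMatrix ℝ G).1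
  set e := hA.eigenvectorBasis with he
  set μ := hA.eigenvalues with hμ
  set vE : EuclideanSpace ℝ (Fin n) := WithLp.toLp 2 v with hvE
  set c : EuclideanSpace ℝ (Fin n) := e.repr vE with hc
  -- v = ∑ c k • e k
  have hrepr : ∑ k, c k • (e k : EuclideanSpace ℝ (Fin n)) = vE := e.sum_repr vE
  -- zero eigenvalue ⇒ coefficient zero
  have hzero : ∀ k, μ k = 0 → c k = 0 := by
    intro k hk
    have h1 : A *ᵥ ⇑(e k) = 0 := by
      rw [hA.mulVec_eigenvectorBasis k, ← hμ, hk, zero_smul]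
    have h2 : ∀ i j : Fin n, (e k : EuclideanSpace ℝ (Fin n)) i = (e k) j := by
      intro i j
      have := (G.lapMatrix_mulVec_eq_zero_iff_forall_reachable (x := ⇑(e k))).1
        h1 i j (hconn.preconnected i j)
      exact this
    have hne : Nonempty (Fin n) := hconn.nonempty
    obtain ⟨i0⟩ := hne
    have hck : c k = ∑ i, (e k : EuclideanSpace ℝ (Fin n)) i * v i := by
      rw [hc, e.repr_apply_apply]
      simp [PiLp.inner_apply, RCLike.inner_apply, hvE]
      exact Finset.sum_congr rfl fun _ _ => mul_comm _ _
    rw [hck]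
    have : ∀ i, (e k : EuclideanSpace ℝ (Fin n)) i * v i = (e k) i0 * v i := by
      intro i; rw [h2 i i0]
    rw [Finset.sum_congr rfl (fun i _ => this i), ← Finset.mul_sum, hv, mul_zero]
  -- A *ᵥ v = ∑ k, (μ k * c k) • e k
  have hmul : A *ᵥ v = ∑ k, (μ k * c k) • (⇑(e k) : Fin n → ℝ) := by
    have h1 : (vE : Fin n → ℝ) = ∑ k, c k • (⇑(e k) : Fin n → ℝ) := by
      rw [← hrepr, WithLp.ofLp_sum]; rfl
    calc A *ᵥ v = A *ᵥ (∑ k, c k • (⇑(e k) : Fin n → ℝ)) := by rw [← h1]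
      _ = ∑ k, c k • (A *ᵥ ⇑(e k)) := by
          rw [show (A *ᵥ (∑ k, c k • (⇑(e k) : Fin n → ℝ))) = A.mulVecLin (∑ k, c k • (⇑(e k) : Fin n → ℝ)) from rfl, map_sum]
          refine Finset.sum_congr rfl fun k _ => ?_
          exact A.mulVecLin.map_smul (c k) _
      _ = ∑ k, (μ k * c k) • (⇑(e k) : Fin n → ℝ) := by
          refine Finset.sum_congr rfl fun k _ => ?_
          rw [hA.mulVec_eigenvectorBasis k, ← hμ, smul_smul, mul_comm]
  -- quadratic form in eigencoordinates
  have hquad : v ⬝ᵥ (A *ᵥ v) = ∑ k, μ k * c k ^ 2 := by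
    rw [hmul, dotProduct]
    simp only [Finset.sum_apply, Finset.mul_sum]
    rw [Finset.sum_comm]
    have : ∀ k, ∑ i, v i * ((μ k * c k) • (⇑(e k) : Fin n → ℝ)) i = μ k * c k ^ 2 := by
      intro k
      simp only [Pi.smul_apply, smul_eq_mul]
      have h3 : ∑ i, v i * (μ k * c k * (e k) i) = (μ k * c k) * ∑ i, (e k) i * v i := by
        rw [Finset.mul_sum]; exact Finset.sum_congr rfl fun i _ => by ring
      rw [h3]
      have h4 : ∑ i, (e k) i * v i = c k := by
        rw [hc, e.repr_apply_apply]
        simp [PiLp.inner_apply, RCLike.inner_apply, hvE]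
        exact Finset.sum_congr rfl fun _ _ => mul_comm _ _
      rw [h4]; ring
    exact Finset.sum_congr rfl fun k _ => this k
  -- norm in eigencoordinates
  have hnorm : ∑ i, v i ^ 2 = ∑ k, c k ^ 2 := by
    have h1 : (∑ i, v i ^ 2) = inner ℝ vE vE := by
      rw [real_inner_self_eq_norm_sq, EuclideanSpace.norm_eq, Real.sq_sqrt (by positivity)]; simp [hvE]
    have h2 : inner ℝ vE vE = inner ℝ c c := by
      rw [hc, ← (e.repr : EuclideanSpace ℝ (Fin n) ≃ₗᵢ[ℝ] _).inner_map_map vE vE]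
    have h3 : inner ℝ c c = ∑ k, c k ^ 2 := by
      rw [real_inner_self_eq_norm_sq, EuclideanSpace.norm_eq, Real.sq_sqrt (by positivity)]; simp
    rw [h1, h2, h3]
  rw [hquad, hnorm, Finset.mul_sum]
  refine Finset.sum_le_sum fun k _ => ?_
  rcases hspec (μ k) (hA.eigenvalues_mem_spectrum_real k) with h | h
  · rw [hzero k h, h]; simp
  · exact mul_le_mul_of_nonneg_right h (sq_nonneg _)




lemma finite_time_zero (V V' : ℝ → ℝ) (κ p : ℝ)
    (hκ : 0 < κ) (hp0 : 0 < p) (hp1 : p < 1)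
    (hVnn : ∀ s, 0 ≤ V s)
    (hd : ∀ s, HasDerivAt V (V' s) s)
    (hineq : ∀ s, V' s ≤ -κ * V s ^ p)
    (t : ℝ) (ht : V 0 ^ (1 - p) / (κ * (1 - p)) ≤ t) : V t = 0 := by
  by_contra hne
  have hVt : 0 < V t := lt_of_le_of_ne (hVnn t) (Ne.symm hne)
  have h1p : 0 < 1 - p := by linarith
  have hT0 : 0 ≤ V 0 ^ (1 - p) / (κ * (1 - p)) :=
    div_nonneg (Real.rpow_nonneg (hVnn 0) _) (by positivity)
  have ht0 : 0 ≤ t := hT0.trans ht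
  have hanti : Antitone V := by
    refine antitone_of_deriv_nonpos (fun s => (hd s).differentiableAt) (fun s => ?_)
    rw [(hd s).deriv]
    have h2 := Real.rpow_nonneg (hVnn s) p
    nlinarith [hineq s]
  have hVpos : ∀ s, s ≤ t → 0 < V s := fun s hs => lt_of_lt_of_le hVt (hanti hs)
  set g : ℝ → ℝ := fun y => V y ^ (1 - p) + κ * (1 - p) * y with hg_def
  have hg : ∀ s, s ≤ t →
      HasDerivAt g (V' s * (1 - p) * V s ^ (1 - p - 1) + κ * (1 - p)) s := by
    intro s hs
    have h1 := (hd s).rpow_const (p := 1 - p) (Or.inl (hVpos s hs).ne')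
    have h2 : HasDerivAt (fun y : ℝ => κ * (1 - p) * y) (κ * (1 - p)) s := by
      simpa using (hasDerivAt_id s).const_mul (κ * (1 - p))
    exact h1.add h2
  have hgderiv_le : ∀ s, s ≤ t → V' s * (1 - p) * V s ^ (1 - p - 1) + κ * (1 - p) ≤ 0 := by
    intro s hs
    have hVs := hVpos s hs
    have h1 : (0:ℝ) < V s ^ (1 - p - 1) := Real.rpow_pos_of_pos hVs _
    have h2 : V' s * ((1 - p) * V s ^ (1 - p - 1)) ≤
        (-κ * V s ^ p) * ((1 - p) * V s ^ (1 - p - 1)) :=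
      mul_le_mul_of_nonneg_right (hineq s) (by positivity)
    have hmul : V s ^ p * V s ^ (1 - p - 1) = 1 := by
      rw [← Real.rpow_add hVs, show p + (1 - p - 1) = 0 by ring, Real.rpow_zero]
    have h3 : (-κ * V s ^ p) * ((1 - p) * V s ^ (1 - p - 1)) = -(κ * (1 - p)) := by
      calc (-κ * V s ^ p) * ((1 - p) * V s ^ (1 - p - 1))
          = -(κ * (1 - p)) * (V s ^ p * V s ^ (1 - p - 1)) := by ring
        _ = -(κ * (1 - p)) := by rw [hmul, mul_one]
    nlinarith [h2, h3]
  have hcont : ContinuousOn g (Set.Icc 0 t) := fun s hs =>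
    ((hg s hs.2).continuousAt).continuousWithinAt
  have hdiff : DifferentiableOn ℝ g (interior (Set.Icc 0 t)) := by
    rw [interior_Icc]
    exact fun s hs => ((hg s hs.2.le).differentiableAt).differentiableWithinAt
  have hderivle : ∀ s ∈ interior (Set.Icc 0 t), deriv g s ≤ 0 := by
    rw [interior_Icc]
    intro s hs
    rw [(hg s hs.2.le).deriv]
    exact hgderiv_le s hs.2.le
  have key : AntitoneOn g (Set.Icc 0 t) :=
    antitoneOn_of_deriv_nonpos (convex_Icc 0 t) hcont hdiff hderivle
  have hgt : g t ≤ g 0 := key (Set.mem_Icc.2 ⟨le_refl 0, ht0⟩) (Set.mem_Icc.2 ⟨ht0, le_refl t⟩) ht0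
  have hVT : V 0 ^ (1 - p) ≤ κ * (1 - p) * t := by
    rw [div_le_iff₀ (by positivity)] at ht
    linarith [ht]
  have hpos : 0 < V t ^ (1 - p) := Real.rpow_pos_of_pos hVt _
  simp only [hg_def, mul_zero, add_zero] at hgt
  linarith




/-- squared Frobenius distance between `S t i` and `S t j`, entrywise. -/
noncomputable def xsq {n : ℕ} (S : ℝ → Fin n → Matrix (Fin 4) (Fin 4) ℝ) (t : ℝ)
    (i j : Fin n) : ℝ := ∑ a, ∑ b, (S t j a b - S t i a b) ^ 2

lemma xsq_nonneg {n : ℕ} (S : ℝ → Fin n → Matrix (Fin 4) (Fin 4) ℝ) (t : ℝ) (i j : Fin n) :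
    0 ≤ xsq S t i j := by unfold xsq; positivity

lemma xsq_symm {n : ℕ} (S : ℝ → Fin n → Matrix (Fin 4) (Fin 4) ℝ) (t : ℝ) (i j : Fin n) :
    xsq S t i j = xsq S t j i := by
  unfold xsq
  exact Finset.sum_congr rfl fun a _ => Finset.sum_congr rfl fun b _ => by ring

lemma xsq_eq_frob {n : ℕ} (S : ℝ → Fin n → Matrix (Fin 4) (Fin 4) ℝ) (t : ℝ) (i j : Fin n) :
    xsq S t i j = frobNorm (S t j - S t i) ^ 2 := by
  rw [frob_sq]
  exact Finset.sum_congr rfl fun a _ => Finset.sum_congr rfl fun b _ => by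
    rw [Matrix.sub_apply]

lemma pow_alpha {r : ℝ} (hr : 0 < r) (α : ℝ) :
    (r ^ α)⁻¹ * r ^ (2:ℕ) = (r ^ (2:ℕ)) ^ ((2 - α)/2) := by
  rw [← Real.rpow_natCast r 2, ← Real.rpow_mul hr.le, ← Real.rpow_neg hr.le,
    ← Real.rpow_add hr]
  congr 1
  push_cast
  ring

/-- entrywise form of the interaction term -/
lemma Fentry {n : ℕ} (G : SimpleGraph (Fin n)) (α : ℝ)
    (S : ℝ → Fin n → Matrix (Fin 4) (Fin 4) ℝ) (t : ℝ) (i : Fin n) (a b : Fin 4) :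
    (∑ j ∈ Finset.univ.filter (fun j => G.Adj i j),
        if S t j = S t i then (0 : Matrix (Fin 4) (Fin 4) ℝ)
        else (frobNorm (S t j - S t i) ^ α)⁻¹ • (S t j - S t i)) a b
    = ∑ j, if G.Adj i j then
        (if S t j = S t i then 0
         else (frobNorm (S t j - S t i) ^ α)⁻¹ * (S t j a b - S t i a b)) else 0 := by
  rw [Matrix.sum_apply, Finset.sum_filter]
  refine Finset.sum_congr rfl fun j _ => ?_
  split_ifs with h1 h2 <;>
    simp [Matrix.smul_apply, Matrix.sub_apply, Matrix.zero_apply, smul_eq_mul]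

lemma ganti {n : ℕ} (S : ℝ → Fin n → Matrix (Fin 4) (Fin 4) ℝ) (α t : ℝ) (i j : Fin n)
    (a b : Fin 4) :
    (if S t i = S t j then 0
     else (frobNorm (S t i - S t j) ^ α)⁻¹ * (S t i a b - S t j a b))
    = -(if S t j = S t i then 0
        else (frobNorm (S t j - S t i) ^ α)⁻¹ * (S t j a b - S t i a b)) := by
  by_cases h : S t j = S t i
  · rw [if_pos h, if_pos h.symm, neg_zero]
  · rw [if_neg h, if_neg (fun h' => h h'.symm)]
    rw [show S t i - S t j = -(S t j - S t i) from (neg_sub _ _).symm, frob_neg]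
    ring






section Main

variable {n : ℕ} (G : SimpleGraph (Fin n)) (α : ℝ)
  (S : ℝ → Fin n → Matrix (Fin 4) (Fin 4) ℝ)

/-- total sum is conserved -/
lemma sum_entries_const
    (hderiv : ∀ i t (a b : Fin 4),
      HasDerivAt (fun s => S s i a b)
        ((∑ j ∈ Finset.univ.filter (fun j => G.Adj i j),
            if S t j = S t i then (0 : Matrix (Fin 4) (Fin 4) ℝ)
            else (frobNorm (S t j - S t i) ^ α)⁻¹ • (S t j - S t i)) a b) t)
    (t : ℝ) (a b : Fin 4) : ∑ i, S t i a b = ∑ i, S 0 i a b := by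
  have hconst : ∀ u : ℝ, HasDerivAt (fun s => ∑ i, S s i a b) 0 u := by
    intro u
    have h1 := HasDerivAt.fun_sum (fun i (_ : i ∈ Finset.univ) => hderiv i u a b)
    have h2 : (∑ i, (∑ j ∈ Finset.univ.filter (fun j => G.Adj i j),
        if S u j = S u i then (0 : Matrix (Fin 4) (Fin 4) ℝ)
        else (frobNorm (S u j - S u i) ^ α)⁻¹ • (S u j - S u i)) a b) = 0 := by
      rw [Finset.sum_congr rfl (fun i _ => Fentry G α S u i a b)]
      exact sum_adj_antisymm G _ (fun i j => ganti S α u i j a b)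
    rwa [h2] at h1
  exact is_const_of_deriv_eq_zero
    (fun u => (hconst u).differentiableAt)
    (fun u => (hconst u).deriv) t 0

/-- the Lyapunov derivative formula -/
lemma deriv_formula (hα0 : 0 < α) (hα1 : α < 1)
    (hderiv : ∀ i t (a b : Fin 4),
      HasDerivAt (fun s => S s i a b)
        ((∑ j ∈ Finset.univ.filter (fun j => G.Adj i j),
            if S t j = S t i then (0 : Matrix (Fin 4) (Fin 4) ℝ)
            else (frobNorm (S t j - S t i) ^ α)⁻¹ • (S t j - S t i)) a b) t)
    (Sc : Matrix (Fin 4) (Fin 4) ℝ) (t : ℝ) :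
    HasDerivAt (fun s => (1/2) * ∑ i, ∑ a, ∑ b, (S s i a b - Sc a b)^2)
      (-(1/2) * ∑ i, ∑ j, (if G.Adj i j then (xsq S t i j) ^ ((2-α)/2) else 0)) t := by
  set gg : Fin n → Fin n → Fin 4 → Fin 4 → ℝ := fun i j a b =>
    if S t j = S t i then 0
    else (frobNorm (S t j - S t i) ^ α)⁻¹ * (S t j a b - S t i a b) with hgg
  set AA : Fin n → Fin n → ℝ := fun i j =>
    ∑ a, ∑ b, (S t i a b - Sc a b) * gg i j a b with hAA
  -- the raw derivative
  have hD : HasDerivAt (fun s => (1/2) * ∑ i, ∑ a, ∑ b, (S s i a b - Sc a b)^2)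
      ((1/2) * ∑ i, ∑ a, ∑ b,
        (2 * (S t i a b - Sc a b) * (∑ j, if G.Adj i j then gg i j a b else 0))) t := by
    refine HasDerivAt.const_mul _ ?_
    refine HasDerivAt.fun_sum fun i _ => HasDerivAt.fun_sum fun a _ => HasDerivAt.fun_sum fun b _ => ?_
    have h1 := ((hderiv i t a b).sub_const (Sc a b)).fun_pow 2
    rw [Fentry G α S t i a b] at h1
    simpa using h1
  -- identify the derivative value
  have hval : (1/2) * ∑ i, ∑ a, ∑ b,
        (2 * (S t i a b - Sc a b) * (∑ j, if G.Adj i j then gg i j a b else 0))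
      = -(1/2) * ∑ i, ∑ j, (if G.Adj i j then (xsq S t i j) ^ ((2-α)/2) else 0) := by
    -- step 1: rewrite as sum over ordered adjacent pairs of AA
    have h1 : ∀ i, (∑ a, ∑ b,
        (2 * (S t i a b - Sc a b) * (∑ j, if G.Adj i j then gg i j a b else 0)))
        = 2 * ∑ j, (if G.Adj i j then AA i j else 0) := by
      intro i
      have e1 : ∀ a b, (2 * (S t i a b - Sc a b) * (∑ j, if G.Adj i j then gg i j a b else 0))
          = ∑ j, (if G.Adj i j then 2 * ((S t i a b - Sc a b) * gg i j a b) else 0) := by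
        intro a b
        rw [Finset.mul_sum]
        refine Finset.sum_congr rfl fun j _ => ?_
        split_ifs <;> ring
      calc ∑ a, ∑ b, (2 * (S t i a b - Sc a b) * (∑ j, if G.Adj i j then gg i j a b else 0))
          = ∑ a, ∑ b, ∑ j, (if G.Adj i j then 2 * ((S t i a b - Sc a b) * gg i j a b) else 0) :=
            Finset.sum_congr rfl fun a _ => Finset.sum_congr rfl fun b _ => e1 a b
        _ = ∑ j, ∑ a, ∑ b, (if G.Adj i j then 2 * ((S t i a b - Sc a b) * gg i j a b) else 0) :=
            sum_swap3 _
        _ = 2 * ∑ j, (if G.Adj i j then AA i j else 0) := by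
            rw [Finset.mul_sum]
            refine Finset.sum_congr rfl fun j _ => ?_
            split_ifs with h
            · simp only [hAA, Finset.mul_sum]
            · simp
    have h2 : (1/2) * ∑ i, ∑ a, ∑ b,
        (2 * (S t i a b - Sc a b) * (∑ j, if G.Adj i j then gg i j a b else 0))
        = ∑ i, ∑ j, (if G.Adj i j then AA i j else 0) := by
      rw [Finset.sum_congr rfl (fun i _ => h1 i), Finset.mul_sum]
      exact Finset.sum_congr rfl fun i _ => by ring
    rw [h2]
    -- step 2: symmetrize
    have hswap : ∑ i, ∑ j, (if G.Adj i j then AA i j else 0)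
        = ∑ i, ∑ j, (if G.Adj i j then AA j i else 0) := by
      rw [Finset.sum_comm]
      exact Finset.sum_congr rfl fun i _ => Finset.sum_congr rfl fun j _ => by
        rw [G.adj_comm]
    -- step 3: AA i j + AA j i = -(xsq ^ p)
    have haa : ∀ i j, AA i j + AA j i = -((xsq S t i j) ^ ((2-α)/2)) := by
      intro i j
      by_cases h : S t j = S t i
      · have hgg0 : ∀ a b, gg i j a b = 0 := fun a b => by simp only [hgg]; rw [if_pos h]
        have hgg0' : ∀ a b, gg j i a b = 0 := fun a b => by
          simp only [hgg]; rw [if_pos h.symm]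
        have hx0 : xsq S t i j = 0 := by
          unfold xsq
          refine Finset.sum_eq_zero fun a _ => Finset.sum_eq_zero fun b _ => ?_
          rw [h]; ring
        have hz1 : AA i j = 0 := by
          simp only [hAA]
          exact Finset.sum_eq_zero fun a _ => Finset.sum_eq_zero fun b _ => by
            rw [hgg0 a b, mul_zero]
        have hz2 : AA j i = 0 := by
          simp only [hAA]
          exact Finset.sum_eq_zero fun a _ => Finset.sum_eq_zero fun b _ => by
            rw [hgg0' a b, mul_zero]
        rw [hz1, hz2, hx0, Real.zero_rpow (show ((2:ℝ)-α)/2 ≠ 0 from (show (0:ℝ) < (2-α)/2 by linarith).ne')]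
        norm_num
      · have hne : S t j - S t i ≠ 0 := sub_ne_zero.2 h
        have hfn : 0 < frobNorm (S t j - S t i) := frob_pos _ hne
        set w : ℝ := (frobNorm (S t j - S t i) ^ α)⁻¹ with hw
        have hggij : ∀ a b, gg i j a b = w * (S t j a b - S t i a b) := fun a b => by
          simp only [hgg]; rw [if_neg h]
        have hggji : ∀ a b, gg j i a b = -(w * (S t j a b - S t i a b)) := fun a b => by
          simp only [hgg]; rw [ganti S α t i j a b, if_neg h]
        have hAAsum : AA i j + AA j i = -(w * xsq S t i j) := by
          simp only [hAA]
          rw [← Finset.sum_add_distrib]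
          unfold xsq
          rw [Finset.mul_sum, ← Finset.sum_neg_distrib]
          refine Finset.sum_congr rfl fun a _ => ?_
          rw [← Finset.sum_add_distrib, Finset.mul_sum, ← Finset.sum_neg_distrib]
          refine Finset.sum_congr rfl fun b _ => ?_
          rw [hggij a b, hggji a b]
          ring
        rw [hAAsum, xsq_eq_frob, hw]
        rw [pow_alpha hfn α]
    -- step 4: put it together
    have hdouble : (∑ i, ∑ j, (if G.Adj i j then AA i j else 0))
        + (∑ i, ∑ j, (if G.Adj i j then AA i j else 0))
        = -(∑ i, ∑ j, (if G.Adj i j then (xsq S t i j) ^ ((2-α)/2) else 0)) := by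
      conv_lhs => rw [show (∑ i, ∑ j, (if G.Adj i j then AA i j else 0))
        + (∑ i, ∑ j, (if G.Adj i j then AA i j else 0))
        = (∑ i, ∑ j, (if G.Adj i j then AA i j else 0))
        + (∑ i, ∑ j, (if G.Adj i j then AA j i else 0)) from by rw [← hswap]]
      rw [← Finset.sum_add_distrib, ← Finset.sum_neg_distrib]
      refine Finset.sum_congr rfl fun i _ => ?_
      rw [← Finset.sum_add_distrib, ← Finset.sum_neg_distrib]
      refine Finset.sum_congr rfl fun j _ => ?_
      split_ifs with hadj
      · rw [haa i j]
      · simp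
    linarith [hdouble]
  rw [← hval]
  exact hD

end Main





lemma main_aux
    (n : ℕ) (hn : 0 < n) (G : SimpleGraph (Fin n)) (hconn : G.Connected)
    (lam2 : ℝ) (hlam2 : 0 < lam2)
    (hspec : ∀ μ : ℝ, μ ∈ spectrum ℝ (G.lapMatrix ℝ) → μ = 0 ∨ lam2 ≤ μ)
    (α : ℝ) (hα0 : 0 < α) (hα1 : α < 1)
    (S : ℝ → Fin n → Matrix (Fin 4) (Fin 4) ℝ)
    (hderiv : ∀ i t (a b : Fin 4),
      HasDerivAt (fun s => S s i a b)
        ((∑ j ∈ Finset.univ.filter (fun j => G.Adj i j),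
            if S t j = S t i then (0 : Matrix (Fin 4) (Fin 4) ℝ)
            else (frobNorm (S t j - S t i) ^ α)⁻¹ • (S t j - S t i)) a b) t)
    (Sc : Matrix (Fin 4) (Fin 4) ℝ) (hScdef : Sc = ((n : ℝ)⁻¹) • ∑ i, S 0 i)
    (V : ℝ → ℝ) (hVdef : V = fun t => (1 / 2) * ∑ i, frobNorm (S t i - Sc) ^ 2)
    (κ : ℝ) (hκdef : κ = (2 * lam2) ^ ((2 - α) / 2)) :
    (∃ V' : ℝ → ℝ, (∀ t, HasDerivAt V (V' t) t) ∧
        ∀ t, 0 ≤ t → V' t ≤ -κ * V t ^ ((2 - α) / 2)) ∧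
      ∀ t, 2 * V 0 ^ (α / 2) / (κ * α) ≤ t → ∀ i, S t i = Sc := by
  set p : ℝ := (2 - α) / 2 with hp_def
  have hp0 : 0 < p := by rw [hp_def]; linarith
  have hp1 : p < 1 := by rw [hp_def]; linarith
  have hκpos : 0 < κ := by rw [hκdef]; exact Real.rpow_pos_of_pos (by linarith) _
  -- scalar representation of V
  have hVrep : ∀ t, V t = (1/2) * ∑ i, ∑ a, ∑ b, (S t i a b - Sc a b)^2 := by
    intro t
    rw [hVdef]
    simp only
    congr 1
    refine Finset.sum_congr rfl fun i _ => ?_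
    rw [frob_sq]
    exact Finset.sum_congr rfl fun a _ => Finset.sum_congr rfl fun b _ => by
      rw [Matrix.sub_apply]
  have hVnn : ∀ t, 0 ≤ V t := fun t => by rw [hVrep]; positivity
  -- the derivative
  set V' : ℝ → ℝ := fun t =>
    -(1/2) * ∑ i, ∑ j, (if G.Adj i j then (xsq S t i j) ^ p else 0) with hV'def
  have hdV : ∀ t, HasDerivAt V (V' t) t := by
    intro t
    have h := deriv_formula G α S hα0 hα1 hderiv Sc t
    have hfun : V = fun s => (1/2) * ∑ i, ∑ a, ∑ b, (S s i a b - Sc a b)^2 := funext hVrep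
    rw [hfun]
    exact h
  -- mean-zero deviations
  have hmean : ∀ t (a b : Fin 4), ∑ i, (S t i a b - Sc a b) = 0 := by
    intro t a b
    have hc := sum_entries_const G α S hderiv t a b
    have hSc_ab : Sc a b = (n:ℝ)⁻¹ * ∑ i, S 0 i a b := by
      rw [hScdef, Matrix.smul_apply, Matrix.sum_apply, smul_eq_mul]
    have hn' : (n:ℝ) ≠ 0 := Nat.cast_ne_zero.2 hn.ne'
    rw [Finset.sum_sub_distrib, hc, Finset.sum_const, Finset.card_univ, Fintype.card_fin,
      hSc_ab, nsmul_eq_mul]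
    field_simp
    ring
  -- key differential inequality
  have hkey : ∀ t, V' t ≤ -κ * V t ^ p := by
    intro t
    have hab : ∀ a b : Fin 4, 2 * lam2 * ∑ i, (S t i a b - Sc a b)^2
        ≤ ∑ i, ∑ j, (if G.Adj i j then (S t j a b - S t i a b)^2 else 0) := by
      intro a b
      set v : Fin n → ℝ := fun i => S t i a b - Sc a b with hv
      have h0 : ∑ i, v i = 0 := hmean t a b
      have h1 := lap_quad_lower G hconn lam2 hspec v h0
      have h2 : Matrix.toLinearMap₂' ℝ (G.lapMatrix ℝ) v v = v ⬝ᵥ (G.lapMatrix ℝ *ᵥ v) :=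
        Matrix.toLinearMap₂'_apply' _ _ _
      have h3 := SimpleGraph.lapMatrix_toLinearMap₂' (R := ℝ) (G := G) v
      have h4 : ∑ i, ∑ j, (if G.Adj i j then (S t j a b - S t i a b)^2 else 0)
          = ∑ i, ∑ j, (if G.Adj i j then (v i - v j)^2 else 0) := by
        refine Finset.sum_congr rfl fun i _ => Finset.sum_congr rfl fun j _ => ?_
        split_ifs
        · simp only [hv]; ring
        · rfl
      have h6 : ∑ i, v i ^ 2 = ∑ i, (S t i a b - Sc a b)^2 := by simp only [hv]
      rw [h6] at h1
      rw [h4]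
      linarith [h1, h2, h3]
    have hpush : ∀ i j, (if G.Adj i j then xsq S t i j else 0)
        = ∑ a, ∑ b, (if G.Adj i j then (S t j a b - S t i a b)^2 else 0) := by
      intro i j
      split_ifs with h
      · rfl
      · simp
    have hswap4 : ∑ i, ∑ j, (if G.Adj i j then xsq S t i j else 0)
        = ∑ a, ∑ b, ∑ i, ∑ j, (if G.Adj i j then (S t j a b - S t i a b)^2 else 0) := by
      rw [Finset.sum_congr rfl (fun i (_ : i ∈ Finset.univ) =>
        Finset.sum_congr rfl (fun j (_ : j ∈ Finset.univ) => hpush i j))]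
      exact sum_swap4 _
    have hVsum : ∑ a, ∑ b, ∑ i, (S t i a b - Sc a b)^2 = 2 * V t := by
      rw [sum_swap3 (fun a b i => (S t i a b - Sc a b)^2), hVrep t]
      ring
    have hspec4 : 2 * lam2 * (2 * V t)
        ≤ ∑ i, ∑ j, (if G.Adj i j then xsq S t i j else 0) := by
      rw [hswap4, ← hVsum]
      have e1 : 2 * lam2 * ∑ a, ∑ b, ∑ i, (S t i a b - Sc a b)^2
          = ∑ a, ∑ b, 2 * lam2 * ∑ i, (S t i a b - Sc a b)^2 := by
        rw [Finset.mul_sum]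
        exact Finset.sum_congr rfl fun a _ => by rw [Finset.mul_sum]
      rw [e1]
      exact Finset.sum_le_sum fun a _ => Finset.sum_le_sum fun b _ => hab a b
    set E := Finset.univ.filter (fun ij : Fin n × Fin n => G.Adj ij.1 ij.2 ∧ ij.1 < ij.2)
      with hE
    have hq_pair : ∑ i, ∑ j, (if G.Adj i j then (xsq S t i j) ^ p else 0)
        = 2 * ∑ ij ∈ E, (xsq S t ij.1 ij.2) ^ p :=
      sum_adj_pair G _ (fun i j => by rw [xsq_symm])
    have hx_pair : ∑ i, ∑ j, (if G.Adj i j then xsq S t i j else 0)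
        = 2 * ∑ ij ∈ E, xsq S t ij.1 ij.2 :=
      sum_adj_pair G _ (fun i j => xsq_symm S t i j)
    have hE_lb : 2 * lam2 * V t ≤ ∑ ij ∈ E, xsq S t ij.1 ij.2 := by
      rw [hx_pair] at hspec4; linarith
    have hsubadd : (∑ ij ∈ E, xsq S t ij.1 ij.2) ^ p ≤ ∑ ij ∈ E, (xsq S t ij.1 ij.2) ^ p :=
      sum_rpow_ge _ _ (fun ij _ => xsq_nonneg S t ij.1 ij.2) hp0 hp1.le
    have h2lVnn : 0 ≤ 2 * lam2 * V t :=
      mul_nonneg (mul_nonneg (by norm_num) hlam2.le) (hVnn t)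
    have hmono : (2 * lam2 * V t) ^ p ≤ (∑ ij ∈ E, xsq S t ij.1 ij.2) ^ p :=
      Real.rpow_le_rpow h2lVnn hE_lb hp0.le
    have hκsplit : (2 * lam2 * V t) ^ p = κ * V t ^ p := by
      rw [Real.mul_rpow (by positivity) (hVnn t), hκdef, hp_def]
    have hV'val : V' t = -(∑ ij ∈ E, (xsq S t ij.1 ij.2) ^ p) := by
      rw [hV'def]
      simp only
      rw [hq_pair]
      ring
    rw [hV'val]
    have : κ * V t ^ p ≤ ∑ ij ∈ E, (xsq S t ij.1 ij.2) ^ p := by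
      rw [← hκsplit]; exact hmono.trans hsubadd
    linarith
  refine ⟨⟨V', fun t => hdV t, fun t _ => hkey t⟩, ?_⟩
  intro t ht i
  have h1p : 1 - p = α / 2 := by rw [hp_def]; ring
  have hVt0 : V t = 0 := by
    apply finite_time_zero V V' κ p hκpos hp0 hp1 hVnn hdV hkey t
    rw [h1p]
    calc V 0 ^ (α/2) / (κ * (α/2)) = 2 * V 0 ^ (α/2) / (κ * α) := by
          rw [div_eq_div_iff (by positivity) (by positivity)]
          ring
      _ ≤ t := ht
  have hz : ∑ i, ∑ a, ∑ b, (S t i a b - Sc a b)^2 = 0 := by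
    have := hVrep t
    rw [hVt0] at this
    linarith
  have h1 := (Finset.sum_eq_zero_iff_of_nonneg (fun i _ => by positivity)).1 hz i
    (Finset.mem_univ i)
  ext a b
  have h2 := (Finset.sum_eq_zero_iff_of_nonneg (fun a _ => by positivity)).1 h1 a
    (Finset.mem_univ a)
  have h3 := (Finset.sum_eq_zero_iff_of_nonneg (fun b _ => by positivity)).1 h2 b
    (Finset.mem_univ b)
  have h4 := sq_eq_zero_iff.1 h3
  linarith [h4]


end FTCaux

/-- Finite-time consensus: along
`dSᵢ/dt = Σ_{j∈N_i}(S_j - S_i)/‖S_j - S_i‖_F^α` on a connected graph with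
algebraic connectivity `λ₂`, the Lyapunov function `V = (1/2)Σᵢ‖Sᵢ - S_c‖_F²`
satisfies `dV/dt ≤ -κ V^{(2-α)/2}` with `κ = (2λ₂)^{(2-α)/2}`, and all `Sᵢ`
reach the initial average in finite time `T_c ≤ 2 V(0)^{α/2}/(κα)`. -/
theorem finite_time_consensus_convergence
    (n : ℕ) (hn : 0 < n) (G : SimpleGraph (Fin n)) (hconn : G.Connected)
    (lam2 : ℝ) (hlam2 : 0 < lam2)
    (hspec : ∀ μ : ℝ, μ ∈ spectrum ℝ (G.lapMatrix ℝ) → μ = 0 ∨ lam2 ≤ μ)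
    (α : ℝ) (hα0 : 0 < α) (hα1 : α < 1)
    (S : ℝ → Fin n → Matrix (Fin 4) (Fin 4) ℝ)
    (hderiv : ∀ i t (a b : Fin 4),
      HasDerivAt (fun s => S s i a b)
        ((∑ j ∈ Finset.univ.filter (fun j => G.Adj i j),
            if S t j = S t i then (0 : Matrix (Fin 4) (Fin 4) ℝ)
            else (frobNorm (S t j - S t i) ^ α)⁻¹ • (S t j - S t i)) a b) t) :
    letI Sc : Matrix (Fin 4) (Fin 4) ℝ := ((n : ℝ)⁻¹) • ∑ i, S 0 i
    letI V : ℝ → ℝ := fun t => (1 / 2) * ∑ i, frobNorm (S t i - Sc) ^ 2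
    letI κ : ℝ := (2 * lam2) ^ ((2 - α) / 2)
    (∃ V' : ℝ → ℝ, (∀ t, HasDerivAt V (V' t) t) ∧
        ∀ t, 0 ≤ t → V' t ≤ -κ * V t ^ ((2 - α) / 2)) ∧
      ∀ t, 2 * V 0 ^ (α / 2) / (κ * α) ≤ t → ∀ i, S t i = Sc := by
  exact FTCaux.main_aux n hn G hconn lam2 hlam2 hspec α hα0 hα1 S hderiv
    _ rfl _ rfl _ rfl
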